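/- arXiv:2601.07039 — 2 statements merged into one kernel-verified Lean document; each statement's English description precedes it below -/
import Mathlib

section
/- Under the standing assumptions, for all real x, y, z one has the pointwise drift bound AV(x,y,z) = σ² + (2(kα + c0·d0/2 − c1)·x + c0·y)·y + (2y + c0·x)·β(x,y,z) ≤ −c0·y² − c0(kα − d1)·x² − 2k(1−α)·y·z − c0·k(1−α)·x·z + σ² + 2c2 + c0·d2. -/
/-- Pointwise drift bound: with `β(x,y,z) = 𝔣(x,y) − k(1−α)z − kαx` and the Lyapunov
function `V(x,y) = (kα + c₀d₀/2 − c₁)x² + y² + c₀xy`, the generator applied to `V`,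
`AV(x,y,z) = σ² + (2(kα + c₀d₀/2 − c₁)x + c₀y)y + (2y + c₀x)β(x,y,z)`, satisfies
`AV ≤ −c₀y² − c₀(kα − d₁)x² − 2k(1−α)yz − c₀k(1−α)xz + σ² + 2c₂ + c₀d₂`. -/
theorem stmt_4 (σ k α b c0 c1 c2 d0 d1 d2 : ℝ) (f : ℝ → ℝ → ℝ)
    (hσ : 0 < σ) (hk : 0 < k) (hα0 : 0 ≤ α) (hα1 : α ≤ 1) (hb : 0 < b)
    (hc0 : 0 < c0) (hc1 : c1 ≤ k * α) (hc2 : 0 ≤ c2)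
    (hd0 : c0 ≤ d0) (hd1 : d1 < k * α) (hd2 : 0 ≤ d2)
    (hf1 : ∀ x y : ℝ, y * f x y ≤ -c0 * y ^ 2 + c1 * x * y + c2)
    (hf2 : ∀ x y : ℝ, x * f x y ≤ -d0 * x * y + d1 * x ^ 2 + d2) :
    ∀ x y z : ℝ,
      σ ^ 2 + (2 * (k * α + c0 * d0 / 2 - c1) * x + c0 * y) * y
          + (2 * y + c0 * x) * (f x y - k * (1 - α) * z - k * α * x)
        ≤ -c0 * y ^ 2 - c0 * (k * α - d1) * x ^ 2
          - 2 * k * (1 - α) * y * z - c0 * k * (1 - α) * x * z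
          + σ ^ 2 + 2 * c2 + c0 * d2 := by
  intro x y z
  have h1 := hf1 x y
  have h2 := mul_le_mul_of_nonneg_left (hf2 x y) hc0.le
  nlinarith [h1, h2]
end

section
/- Under the standing assumptions, the Lyapunov drift condition holds: for all real x, y and all z with |z| ≤ b, AV(x,y,z) = σ² + (2(kα + c0·d0/2 − c1)·x + c0·y)·y + (2y + c0·x)·β(x,y,z) ≤ −C1·V(x,y) + C, where C1 = min(c0/3, c0(kα − d1)/(2kα + c0·d0 + c0² − 2c1)) and C = σ² + 2c2 + c0·d2 + (k·b·(1−α))²·(2/c0 + c0/(2(kα − d1))). -/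
set_option maxHeartbeats 1000000


/-- The Lyapunov function `V(x,y) = (kα + c₀d₀/2 − c₁)x² + y² + c₀xy`. -/
noncomputable def V (k α c0 c1 d0 x y : ℝ) : ℝ :=
  (k * α + c0 * d0 / 2 - c1) * x ^ 2 + y ^ 2 + c0 * x * y

/-- Lyapunov drift condition: for `|z| ≤ b`,
`AV(x,y,z) = σ² + (2(kα + c₀d₀/2 − c₁)x + c₀y)y + (2y + c₀x)β(x,y,z) ≤ −C₁·V(x,y) + C`,
where `β(x,y,z) = 𝔣(x,y) − k(1−α)z − kαx`,
`C₁ = min(c₀/3, c₀(kα − d₁)/(2kα + c₀d₀ + c₀² − 2c₁))` and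
`C = σ² + 2c₂ + c₀d₂ + (kb(1−α))²(2/c₀ + c₀/(2(kα − d₁)))`. -/
theorem stmt_5 (σ k α b c0 c1 c2 d0 d1 d2 : ℝ) (f : ℝ → ℝ → ℝ)
    (hσ : 0 < σ) (hk : 0 < k) (hα0 : 0 ≤ α) (hα1 : α ≤ 1) (hb : 0 < b)
    (hc0 : 0 < c0) (hc1 : c1 ≤ k * α) (hc2 : 0 ≤ c2)
    (hd0 : c0 ≤ d0) (hd1 : d1 < k * α) (hd2 : 0 ≤ d2)
    (hf1 : ∀ x y : ℝ, y * f x y ≤ -c0 * y ^ 2 + c1 * x * y + c2)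
    (hf2 : ∀ x y : ℝ, x * f x y ≤ -d0 * x * y + d1 * x ^ 2 + d2) :
    ∀ x y z : ℝ, |z| ≤ b →
      σ ^ 2 + (2 * (k * α + c0 * d0 / 2 - c1) * x + c0 * y) * y
          + (2 * y + c0 * x) * (f x y - k * (1 - α) * z - k * α * x)
        ≤ -(min (c0 / 3) (c0 * (k * α - d1) / (2 * k * α + c0 * d0 + c0 ^ 2 - 2 * c1)))
              * V k α c0 c1 d0 x y
          + (σ ^ 2 + 2 * c2 + c0 * d2
              + (k * b * (1 - α)) ^ 2 * (2 / c0 + c0 / (2 * (k * α - d1)))) := by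
  intro x y z hz
  have he : 0 < k * α - d1 := by linarith
  have hD : 0 < 2 * k * α + c0 * d0 + c0 ^ 2 - 2 * c1 := by nlinarith [mul_le_mul_of_nonneg_left hd0 hc0.le, sq_nonneg c0]
  set Cm := min (c0 / 3) (c0 * (k * α - d1) / (2 * k * α + c0 * d0 + c0 ^ 2 - 2 * c1)) with hCm
  have hCma : Cm ≤ c0 / 3 := min_le_left _ _
  have hCmb : Cm * (2 * k * α + c0 * d0 + c0 ^ 2 - 2 * c1) ≤ c0 * (k * α - d1) :=
    (le_div_iff₀ hD).mp (min_le_right _ _)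
  have hCmnn : 0 ≤ Cm :=
    le_min (by positivity) (div_nonneg (by nlinarith) hD.le)
  -- bound on z terms
  have hzb := abs_le.mp hz
  have hz2 : z ^ 2 ≤ b ^ 2 := by nlinarith [hzb.1, hzb.2]
  have hw2 : (k * (1 - α) * z) ^ 2 ≤ (k * b * (1 - α)) ^ 2 := by
    nlinarith [mul_nonneg (sq_nonneg (k * (1 - α))) (sub_nonneg.2 hz2)]
  have n1 : 2 * y * (-(k * (1 - α) * z)) ≤ c0 / 2 * y ^ 2 + 2 * (k * b * (1 - α)) ^ 2 / c0 := by
    have h : c0 * (2 * y * (-(k * (1 - α) * z)))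
        ≤ c0 * (c0 / 2 * y ^ 2 + 2 * (k * b * (1 - α)) ^ 2 / c0) := by
      have hr : c0 * (c0 / 2 * y ^ 2 + 2 * (k * b * (1 - α)) ^ 2 / c0)
          = c0 ^ 2 / 2 * y ^ 2 + 2 * (k * b * (1 - α)) ^ 2 := by
        field_simp
      rw [hr]
      nlinarith [sq_nonneg (c0 * y + 2 * (k * (1 - α) * z)), hw2]
    exact le_of_mul_le_mul_left h hc0
  have n2 : c0 * x * (-(k * (1 - α) * z))
      ≤ c0 * (k * α - d1) / 2 * x ^ 2 + c0 * (k * b * (1 - α)) ^ 2 / (2 * (k * α - d1)) := by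
    have h2e : (0:ℝ) < 2 * (k * α - d1) := by linarith
    have h : (2 * (k * α - d1)) * (c0 * x * (-(k * (1 - α) * z)))
        ≤ (2 * (k * α - d1)) * (c0 * (k * α - d1) / 2 * x ^ 2
            + c0 * (k * b * (1 - α)) ^ 2 / (2 * (k * α - d1))) := by
      have hr : (2 * (k * α - d1)) * (c0 * (k * α - d1) / 2 * x ^ 2
            + c0 * (k * b * (1 - α)) ^ 2 / (2 * (k * α - d1)))
          = c0 * (k * α - d1) ^ 2 * x ^ 2 + c0 * (k * b * (1 - α)) ^ 2 := by
        field_simp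
      rw [hr]
      nlinarith [mul_nonneg hc0.le (sq_nonneg ((k * α - d1) * x + k * (1 - α) * z)),
        mul_nonneg hc0.le (sub_nonneg.2 hw2)]
    exact le_of_mul_le_mul_left h h2e
  -- bound Cm * V
  have h2 : Cm * ((k * α + c0 * d0 / 2 - c1) * x ^ 2 + y ^ 2 + c0 * x * y)
      ≤ c0 / 2 * y ^ 2 + c0 * (k * α - d1) / 2 * x ^ 2 := by
    nlinarith [mul_nonneg hCmnn (sq_nonneg (c0 * x - y)),
      mul_nonneg (sub_nonneg.2 hCma) (sq_nonneg y),
      mul_nonneg (sub_nonneg.2 hCmb) (sq_nonneg x)]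
  have hf1' := hf1 x y
  have hf2c : c0 * (x * f x y) ≤ c0 * (-d0 * x * y + d1 * x ^ 2 + d2) :=
    mul_le_mul_of_nonneg_left (hf2 x y) hc0.le
  have hsplit : (k * b * (1 - α)) ^ 2 * (2 / c0 + c0 / (2 * (k * α - d1)))
      = 2 * (k * b * (1 - α)) ^ 2 / c0
        + c0 * (k * b * (1 - α)) ^ 2 / (2 * (k * α - d1)) := by ring
  simp only [V]
  rw [hsplit]
  nlinarith [h2, n1, n2, hf1', hf2c]
end
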